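/- Let B ⊆ F be a finite additive subgroup and let f, g : B → F be additive maps (so f(0) = g(0) = 0) satisfying Tr[((f(s) + f(t))·(g(s) + g(t)))/(s + t)²] = 1 for all distinct s, t ∈ B (an additive partial flock of size |B|). Set A = B \ {0} and define p(t) = f(t)/t and r(t) = g(t)/t for t ∈ A. Then Tr(p(t)r(t)) = 1 for all t ∈ A, the closure identities (s·p(s) + t·p(t))/(s + t) = p(s + t) and (s·r(s) + t·r(t))/(s + t) = r(s + t) hold for distinct s, t ∈ A, and the set {F_{p(λ),r(λ),λ} : λ ∈ A} is a closed set of conics; consequently the union of these conics with the point (0,0,1) is a maximal arc of degree |B| in PG(2,q). -/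

import Mathlib

/-!
STATEMENT 5: From an additive partial flock to a closed set of conics.  Given a
finite additive subgroup `B ⊆ F`, additive maps `f, g` on `B` with the
partial-flock trace condition, set `A = B \ {0}`, `p(t) = f(t)/t`,
`r(t) = g(t)/t`.  Then `Tr(p(t)r(t)) = 1` on `A`, Mathon's closure identities
hold, the set `{F_{p(λ),r(λ),λ} : λ ∈ A}` is a closed set of conics, and the
union of these conics with `(0,0,1)` is a maximal arc of degree `|B|` in
`PG(2,q)`.
-/

open Projectivization

noncomputable section

abbrev F (h : ℕ) : Type := GaloisField 2 h

instance {h : ℕ} : DecidableEq (F h) := Classical.decEq _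

/-- The absolute trace map from `GF(2^h)` onto `GF(2)`. -/
def Tr {h : ℕ} (x : F h) : ZMod 2 := Algebra.trace (ZMod 2) (F h) x

/-- Points of the Desarguesian projective plane `PG(2, 2^h)`. -/
abbrev Pt (h : ℕ) := Projectivization (F h) (Fin 3 → F h)

/-- The point set of the conic `F_{α,β,λ} = {(x,y,z) : αx² + xy + βy² + λz² = 0}`. -/
def conic {h : ℕ} (α β lam : F h) : Set (Pt h) :=
  {P | α * P.rep 0 ^ 2 + P.rep 0 * P.rep 1 + β * P.rep 1 ^ 2 + lam * P.rep 2 ^ 2 = 0}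

/-- The point set of the line `[u,v,w]`. -/
def lineSet {h : ℕ} (u v w : F h) : Set (Pt h) :=
  {P | P.rep 0 * u + P.rep 1 * v + P.rep 2 * w = 0}

/-- The common nucleus `(0,0,1)` of the conics `F_{α,β,λ}`. -/
def nucleus {h : ℕ} : Pt h :=
  Projectivization.mk (F h) ![0, 0, 1] (by
    intro hcon
    simpa using congrFun hcon 2)

/-- Mathon's composition of conics, on the level of parameter triples `(α, β, λ)`. -/
def compose {h : ℕ} (c c' : F h × F h × F h) : F h × F h × F h :=
  ((c.1 * c.2.2 + c'.1 * c'.2.2) / (c.2.2 + c'.2.2),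
   (c.2.1 * c.2.2 + c'.2.1 * c'.2.2) / (c.2.2 + c'.2.2),
   c.2.2 + c'.2.2)

/-- A closed set of conics, given by a finite set of parameter triples `(α, β, λ)`. -/
def IsClosedConicSet {h : ℕ} (C : Finset (F h × F h × F h)) : Prop :=
  (∀ c ∈ C, c.2.2 ≠ 0 ∧ Tr (c.1 * c.2.1) = 1) ∧
  (∀ c ∈ C, ∀ c' ∈ C, c ≠ c' → c.2.2 ≠ c'.2.2) ∧
  (∀ c ∈ C, ∀ c' ∈ C, c ≠ c' → compose c c' ∈ C)

/-- The union of the points of the conics of `C` together with the nucleus. -/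
def mathonArc {h : ℕ} (C : Finset (F h × F h × F h)) : Set (Pt h) :=
  {nucleus} ∪ ⋃ c ∈ C, conic c.1 c.2.1 c.2.2


/-! ### Auxiliary lemmas -/

section Aux

variable {h : ℕ}

lemma h2' : (2 : F h) = 0 := CharTwo.two_eq_zero

lemma Tr_add (x y : F h) : Tr (x + y) = Tr x + Tr y := map_add _ x y

lemma Tr_ne_zero : ∃ x : F h, Tr x ≠ 0 := by
  have htr := (traceForm_nondegenerate (ZMod 2) (F h)).1 1
  by_contra! hf
  exact one_ne_zero (htr fun y => by simpa [Algebra.traceForm_apply, Tr] using hf (1 * y))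

/-- Frobenius as an algebra equivalence over `ZMod 2`. -/
def frobAlg (h : ℕ) : F h ≃ₐ[ZMod 2] F h :=
  AlgEquiv.ofRingEquiv (f := frobeniusEquiv (F h) 2) (by
    intro x; rw [frobeniusEquiv_def, ← map_pow]; congr 1; exact ZMod.pow_card x)

lemma Tr_sq (x : F h) : Tr (x ^ 2) = Tr x := by
  have := Algebra.trace_eq_of_algEquiv (frobAlg h) x
  simpa [Tr, frobAlg, frobeniusEquiv_def, frobenius_def] using this

/-- The Artin–Schreier map. -/
def asMap (h : ℕ) : F h →+ F h where
  toFun x := x ^ 2 + x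
  map_zero' := by ring
  map_add' x y := by
    show (x + y) ^ 2 + (x + y) = (x ^ 2 + x) + (y ^ 2 + y)
    rw [CharTwo.add_sq x y]; ring

def trHom (h : ℕ) : F h →+ ZMod 2 := (Algebra.trace (ZMod 2) (F h)).toAddMonoidHom

lemma Tr_as (x : F h) : Tr (x ^ 2 + x) = 0 := by
  rw [show Tr (x^2+x) = Tr (x^2) + Tr x from map_add _ _ _, Tr_sq]
  exact CharTwo.add_self_eq_zero _

lemma ker_asMap_coe : ((asMap h).ker : Set (F h)) = {0, 1} := by
  ext x
  simp only [SetLike.mem_coe, AddMonoidHom.mem_ker, asMap, AddMonoidHom.coe_mk, ZeroHom.coe_mk,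
    Set.mem_insert_iff, Set.mem_singleton_iff]
  constructor
  · intro hx
    have hx2 : x * (x + 1) = 0 := by linear_combination hx
    rcases mul_eq_zero.1 hx2 with h1 | h1
    · exact Or.inl h1
    · exact Or.inr (by linear_combination h1 - CharTwo.two_eq_zero (R := F h))
  · rintro (rfl | rfl)
    · simp
    · simp only [one_pow]
      exact CharTwo.add_self_eq_zero _

lemma card_ker_asMap : Nat.card (asMap h).ker = 2 := by
  have hc : Nat.card (asMap h).ker = ((asMap h).ker : Set (F h)).ncard :=
    (Nat.card_coe_set_eq _).trans rfl
  rw [hc, ker_asMap_coe, Set.ncard_pair (zero_ne_one)]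

lemma trHom_surjective : Function.Surjective (trHom h) := by
  obtain ⟨x, hx⟩ := Tr_ne_zero (h := h)
  intro c
  fin_cases c
  · exact ⟨0, map_zero _⟩
  · exact ⟨x, by
      have hall : ∀ a : ZMod 2, a ≠ 0 → a = 1 := by decide
      exact hall _ hx⟩

lemma card_ker_trHom : Nat.card (trHom h).ker * 2 = Nat.card (F h) := by
  have h1 := AddSubgroup.card_eq_card_quotient_mul_card_addSubgroup (trHom h).ker
  have hq : Nat.card (F h ⧸ (trHom h).ker) = Nat.card (ZMod 2) := by
    have e := QuotientAddGroup.quotientKerEquivOfSurjective (trHom h) trHom_surjective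
    exact Nat.card_congr e.toEquiv
  rw [hq, Nat.card_zmod] at h1
  omega

lemma card_range_asMap : Nat.card (asMap h).range * 2 = Nat.card (F h) := by
  have h1 := AddSubgroup.card_eq_card_quotient_mul_card_addSubgroup (asMap h).ker
  have hq : Nat.card (F h ⧸ (asMap h).ker) = Nat.card (asMap h).range :=
    Nat.card_congr (QuotientAddGroup.quotientKerEquivRange (asMap h)).toEquiv
  rw [hq, card_ker_asMap] at h1
  omega

lemma range_le_ker : (asMap h).range ≤ (trHom h).ker := by
  rintro x ⟨y, rfl⟩
  exact Tr_as y

lemma exists_as_root {c : F h} (hc : Tr c = 0) : ∃ x : F h, x ^ 2 + x = c := by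
  have hcard : Nat.card (trHom h).ker ≤ Nat.card (asMap h).range := by
    have hk := card_ker_trHom (h := h); have hr := card_range_asMap (h := h); omega
  have heq : (asMap h).range = (trHom h).ker :=
    AddSubgroup.eq_of_le_of_card_ge range_le_ker hcard
  have hx : c ∈ (asMap h).range := heq ▸ (by exact hc : c ∈ (trHom h).ker)
  obtain ⟨x, hx⟩ := hx
  exact ⟨x, hx⟩

lemma quad_no_sol {A B : F h} (hT : Tr (A * B) = 1) :
    ∀ x y : F h, ¬(x = 0 ∧ y = 0) → A * x ^ 2 + x * y + B * y ^ 2 ≠ 0 := by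
  intro x y hxy heq
  by_cases hy : y = 0
  · subst hy
    have hx : x ≠ 0 := fun hx => hxy ⟨hx, rfl⟩
    have hA : A = 0 := by
      have hAx : A * x ^ 2 = 0 := by linear_combination heq
      rcases mul_eq_zero.1 hAx with hA | hx2
      · exact hA
      · exact absurd (pow_eq_zero_iff (n := 2) (by norm_num) |>.1 hx2) hx
    rw [hA, zero_mul] at hT
    simp [Tr] at hT
  · by_cases hA : A = 0
    · rw [hA, zero_mul] at hT
      simp [Tr] at hT
    · set u := x / y with hu
      have hq : A * u ^ 2 + u + B = 0 := by
        rw [hu]; field_simp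
        linear_combination heq
      have hw : (A * u) ^ 2 + (A * u) = A * B := by
        linear_combination A * hq - A * B * h2'
      have hT0 := Tr_as (A * u)
      rw [hw, hT] at hT0
      exact one_ne_zero hT0

lemma quad_sols {A B : F h} (hT : Tr (A * B) = 0) :
    ∃ x₁ y₁ x₂ y₂ : F h,
      (¬(x₁ = 0 ∧ y₁ = 0)) ∧ (¬(x₂ = 0 ∧ y₂ = 0)) ∧
      A * x₁ ^ 2 + x₁ * y₁ + B * y₁ ^ 2 = 0 ∧
      A * x₂ ^ 2 + x₂ * y₂ + B * y₂ ^ 2 = 0 ∧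
      x₁ * y₂ ≠ x₂ * y₁ ∧
      (∀ x y : F h, ¬(x = 0 ∧ y = 0) → A * x ^ 2 + x * y + B * y ^ 2 = 0 →
        ∃ c : F h, c ≠ 0 ∧ ((x = c * x₁ ∧ y = c * y₁) ∨ (x = c * x₂ ∧ y = c * y₂))) := by
  by_cases hA : A = 0
  · refine ⟨1, 0, B, 1, by simp, by simp, by rw [hA]; ring, ?_, by simp, ?_⟩
    · rw [hA]; linear_combination B * h2'
    intro x y hxy heq
    rw [hA] at heq
    by_cases hy : y = 0
    · exact ⟨x, fun hx => hxy ⟨hx, hy⟩, Or.inl ⟨by ring, by rw [hy]; ring⟩⟩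
    · refine ⟨y, hy, Or.inr ⟨?_, by ring⟩⟩
      have hxB : y * (x + B * y) = 0 := by linear_combination heq
      rcases mul_eq_zero.1 hxB with h1 | h1
      · exact absurd h1 hy
      · linear_combination h1 - B * y * h2'
  · obtain ⟨s, hs⟩ := exists_as_root hT
    set u₁ := s / A with hu₁
    set u₂ := (s + 1) / A with hu₂
    have hsat1 : A * u₁ ^ 2 + u₁ * 1 + B * 1 ^ 2 = 0 := by
      rw [hu₁]; field_simp
      linear_combination hs + A*B*h2'
    have hsat2 : A * u₂ ^ 2 + u₂ * 1 + B * 1 ^ 2 = 0 := by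
      rw [hu₂]; field_simp
      linear_combination hs + (s + 1 + A*B)*h2'
    have hne : u₁ * 1 ≠ u₂ * 1 := by
      simp only [mul_one, hu₁, hu₂]
      intro hcon
      rw [div_eq_div_iff hA hA] at hcon
      have h10 : (1 : F h) = 0 := by
        have hcc := mul_right_cancel₀ hA hcon
        linear_combination -hcc
      exact one_ne_zero h10
    refine ⟨u₁, 1, u₂, 1, by simp, by simp, hsat1, hsat2, hne, ?_⟩
    intro x y hxy heq
    have hy : y ≠ 0 := by
      intro hy0
      subst hy0
      have hx : x ≠ 0 := fun hx => hxy ⟨hx, rfl⟩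
      have hAx : A * x ^ 2 = 0 := by linear_combination heq
      rcases mul_eq_zero.1 hAx with h1 | h1
      · exact hA h1
      · exact hx (pow_eq_zero_iff (n := 2) (by norm_num) |>.1 h1)
    refine ⟨y, hy, ?_⟩
    set u := x / y with hu
    have hq : A * u ^ 2 + u + B = 0 := by
      rw [hu]; field_simp
      linear_combination heq
    have hfac : A * ((u + u₁) * (u + u₂)) = A * u ^ 2 + u + B := by
      rw [hu₁, hu₂]; field_simp
      linear_combination hs + A*s*u*h2'
    rw [hq] at hfac
    rcases mul_eq_zero.1 hfac with h1 | h1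
    · exact absurd h1 hA
    rcases mul_eq_zero.1 h1 with h1 | h1
    · left
      constructor
      · have hux : u = u₁ := by linear_combination h1 - u₁ * h2'
        rw [← hux, hu]
        field_simp
      · ring
    · right
      constructor
      · have hux : u = u₂ := by linear_combination h1 - u₂ * h2'
        rw [← hux, hu]
        field_simp
      · ring

/-! ### Projective plane lemmas -/

lemma rep_eq_smul (v : Fin 3 → F h) (hv : v ≠ 0) :
    ∃ a : (F h)ˣ, ∀ i, (Projectivization.mk (F h) v hv).rep i = a * v i := by
  obtain ⟨a, ha⟩ := (Projectivization.mk_eq_mk_iff (F h) _ v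
    (Projectivization.rep_nonzero _) hv).1
      (Projectivization.mk_rep (Projectivization.mk (F h) v hv))
  exact ⟨a, fun i => by rw [← ha]; simp [Units.smul_def]⟩

lemma mem_conic_iff {α β lam : F h} (v : Fin 3 → F h) (hv : v ≠ 0) :
    Projectivization.mk (F h) v hv ∈ conic α β lam ↔
      α * v 0 ^ 2 + v 0 * v 1 + β * v 1 ^ 2 + lam * v 2 ^ 2 = 0 := by
  obtain ⟨a, ha⟩ := rep_eq_smul v hv
  have key : α * (Projectivization.mk (F h) v hv).rep 0 ^ 2
      + (Projectivization.mk (F h) v hv).rep 0 * (Projectivization.mk (F h) v hv).rep 1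
      + β * (Projectivization.mk (F h) v hv).rep 1 ^ 2
      + lam * (Projectivization.mk (F h) v hv).rep 2 ^ 2
      = (a : F h) ^ 2 * (α * v 0 ^ 2 + v 0 * v 1 + β * v 1 ^ 2 + lam * v 2 ^ 2) := by
    rw [ha 0, ha 1, ha 2]; ring
  constructor
  · intro hm
    have h0 := key.symm.trans hm
    rcases mul_eq_zero.1 h0 with h1 | h1
    · exact absurd (pow_eq_zero_iff (n := 2) (by norm_num) |>.1 h1) a.ne_zero
    · exact h1
  · intro h0
    show _ = _
    rw [key, h0, mul_zero]

lemma mem_lineSet_iff {u v w : F h} (x : Fin 3 → F h) (hx : x ≠ 0) :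
    Projectivization.mk (F h) x hx ∈ lineSet u v w ↔
      x 0 * u + x 1 * v + x 2 * w = 0 := by
  obtain ⟨a, ha⟩ := rep_eq_smul x hx
  have key : (Projectivization.mk (F h) x hx).rep 0 * u
      + (Projectivization.mk (F h) x hx).rep 1 * v
      + (Projectivization.mk (F h) x hx).rep 2 * w
      = (a : F h) * (x 0 * u + x 1 * v + x 2 * w) := by
    rw [ha 0, ha 1, ha 2]; ring
  constructor
  · intro hm
    have h0 := key.symm.trans hm
    rcases mul_eq_zero.1 h0 with h1 | h1
    · exact absurd h1 a.ne_zero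
    · exact h1
  · intro h0
    show _ = _
    rw [key, h0, mul_zero]

lemma nucleus_mem_lineSet_iff {u v w : F h} : nucleus (h := h) ∈ lineSet u v w ↔ w = 0 := by
  rw [nucleus, mem_lineSet_iff]
  simp

lemma nucleus_not_mem_conic {α β lam : F h} (hl : lam ≠ 0) :
    nucleus (h := h) ∉ conic α β lam := by
  rw [nucleus, mem_conic_iff]
  simpa using hl

lemma sq_inj {x y : F h} (hxy : x ^ 2 = y ^ 2) : x = y := by
  have hs : (x + y) ^ 2 = 0 := by
    rw [CharTwo.add_sq, hxy]
    exact CharTwo.add_self_eq_zero _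
  have hxy0 : x + y = 0 := pow_eq_zero_iff (n := 2) (by norm_num) |>.1 hs
  linear_combination hxy0 - y * h2'

/-- square root in a perfect field of characteristic 2 -/
def fsqrt {h : ℕ} (x : F h) : F h := (frobeniusEquiv (F h) 2).symm x

lemma fsqrt_sq (x : F h) : (fsqrt x) ^ 2 = x := frobeniusEquiv_symm_pow_p (F h) 2 x

lemma vec_eq_zero_iff (x : Fin 3 → F h) : x = 0 ↔ x 0 = 0 ∧ x 1 = 0 ∧ x 2 = 0 := by
  constructor
  · intro hx; exact ⟨by rw [hx]; rfl, by rw [hx]; rfl, by rw [hx]; rfl⟩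
  · rintro ⟨ha, hb, hc⟩
    funext i
    fin_cases i <;> assumption

lemma conic_inter_line0 {α β l u v : F h} (hl : l ≠ 0) (huv : ¬(u = 0 ∧ v = 0)) :
    conic α β l ∩ lineSet u v 0 =
      {Projectivization.mk (F h) ![v, u, fsqrt ((α * v ^ 2 + u * v + β * u ^ 2) / l)]
        (by
          intro hc
          rw [vec_eq_zero_iff] at hc
          exact huv ⟨by simpa using hc.2.1, by simpa using hc.1⟩)} := by
  set sq := fsqrt ((α * v ^ 2 + u * v + β * u ^ 2) / l) with hsq
  have hsq2 : sq ^ 2 = (α * v ^ 2 + u * v + β * u ^ 2) / l := fsqrt_sq _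
  ext P
  induction P using Projectivization.ind with
  | h x hx =>
  rw [Set.mem_inter_iff, mem_conic_iff, mem_lineSet_iff, Set.mem_singleton_iff,
    Projectivization.mk_eq_mk_iff]
  constructor
  · rintro ⟨hcon, hlin⟩
    have hvu : ∃ c : F h, x 0 = c * v ∧ x 1 = c * u := by
      by_cases hu : u = 0
      · have hv : v ≠ 0 := fun hv => huv ⟨hu, hv⟩
        have hx1 : x 1 = 0 := by
          have hx1v : x 1 * v = 0 := by
            rw [hu] at hlin
            linear_combination hlin
          rcases mul_eq_zero.1 hx1v with h1 | h1
          · exact h1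
          · exact absurd h1 hv
        exact ⟨x 0 / v, by field_simp, by rw [hx1, hu, mul_zero]⟩
      · refine ⟨x 1 / u, ?_, by field_simp⟩
        have hxu : x 0 * u = x 1 * v := by
          linear_combination hlin - (x 1 * v) * h2'
        field_simp
        linear_combination hxu
    obtain ⟨c, hc0, hc1⟩ := hvu
    have hcne : c ≠ 0 := by
      intro hc
      rw [hc, zero_mul] at hc0 hc1
      have hz2 : l * x 2 ^ 2 = 0 := by
        rw [hc0, hc1] at hcon
        linear_combination hcon
      have hx2 : x 2 = 0 := by
        rcases mul_eq_zero.1 hz2 with h1 | h1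
        · exact absurd h1 hl
        · exact pow_eq_zero_iff (n := 2) (by norm_num) |>.1 h1
      exact hx (vec_eq_zero_iff x |>.2 ⟨hc0, hc1, hx2⟩)
    have hz : x 2 = c * sq := by
      apply sq_inj
      rw [mul_pow, hsq2]
      rw [hc0, hc1] at hcon
      field_simp
      linear_combination hcon - (c ^ 2 * (α * v ^ 2 + u * v + β * u ^ 2)) * h2'
    refine ⟨Units.mk0 c hcne, ?_⟩
    funext i
    fin_cases i <;>
      simp only [Units.smul_def, Units.val_mk0, Pi.smul_apply, smul_eq_mul] <;>
      simp [hc0, hc1, hz]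
  · rintro ⟨a, ha⟩
    have hx0 : x 0 = a * v := by rw [← ha]; simp [Units.smul_def]
    have hx1 : x 1 = a * u := by rw [← ha]; simp [Units.smul_def]
    have hx2 : x 2 = a * sq := by rw [← ha]; simp [Units.smul_def]
    constructor
    · rw [hx0, hx1, hx2]
      have hls : l * sq ^ 2 = α * v ^ 2 + u * v + β * u ^ 2 := by
        rw [hsq2]; field_simp
      linear_combination (a:F h)^2 * hls + ((a:F h)^2 * (α * v^2 + u*v + β*u^2)) * h2'
    · rw [hx0, hx1]
      linear_combination ((a:F h) * u * v) * h2'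

lemma mem_inter_iff_w {α β l u v w : F h} (hw : w ≠ 0) (x : Fin 3 → F h) (hx : x ≠ 0) :
    (Projectivization.mk (F h) x hx ∈ conic α β l ∩ lineSet u v w) ↔
      (¬(x 0 = 0 ∧ x 1 = 0) ∧ x 2 = (u / w) * x 0 + (v / w) * x 1 ∧
        (α + l * (u / w) ^ 2) * x 0 ^ 2 + x 0 * x 1 + (β + l * (v / w) ^ 2) * x 1 ^ 2 = 0) := by
  rw [Set.mem_inter_iff, mem_conic_iff, mem_lineSet_iff]
  constructor
  · rintro ⟨hcon, hlin⟩
    have hz : x 2 = (u / w) * x 0 + (v / w) * x 1 := by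
      field_simp
      linear_combination hlin - (x 0 * u + x 1 * v) * h2'
    have hsq : (u / w * x 0 + v / w * x 1) ^ 2
        = (u / w) ^ 2 * x 0 ^ 2 + (v / w) ^ 2 * x 1 ^ 2 := by
      rw [CharTwo.add_sq]; ring
    have hq : (α + l * (u / w) ^ 2) * x 0 ^ 2 + x 0 * x 1 + (β + l * (v / w) ^ 2) * x 1 ^ 2 = 0 := by
      rw [hz, hsq] at hcon
      linear_combination hcon
    refine ⟨?_, hz, hq⟩
    rintro ⟨ha, hb⟩
    rw [ha, hb] at hz
    simp only [mul_zero, add_zero] at hz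
    exact hx (vec_eq_zero_iff x |>.2 ⟨ha, hb, hz⟩)
  · rintro ⟨hxy, hz, hq⟩
    constructor
    · have hsq : (u / w * x 0 + v / w * x 1) ^ 2
          = (u / w) ^ 2 * x 0 ^ 2 + (v / w) ^ 2 * x 1 ^ 2 := by
        rw [CharTwo.add_sq]; ring
      rw [hz, hsq]
      linear_combination hq
    · rw [hz]
      have hAw : (u / w * x 0 + v / w * x 1) * w = u * x 0 + v * x 1 := by
        field_simp
      linear_combination hAw + (x 0 * u + x 1 * v) * h2'

lemma conic_inter_lineW_empty {α β l u v w : F h} (hw : w ≠ 0)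
    (hT : Tr ((α + l * (u / w) ^ 2) * (β + l * (v / w) ^ 2)) = 1) :
    conic α β l ∩ lineSet u v w = ∅ := by
  ext P
  induction P using Projectivization.ind with
  | h x hx =>
  simp only [Set.mem_empty_iff_false, iff_false]
  rw [mem_inter_iff_w hw x hx]
  rintro ⟨hxy, hz, hq⟩
  exact quad_no_sol hT (x 0) (x 1) hxy hq

lemma vec_eq_ext (x y : Fin 3 → F h) (ha : x 0 = y 0) (hb : x 1 = y 1) (hc : x 2 = y 2) :
    x = y := funext fun i => by fin_cases i <;> assumption

lemma conic_inter_lineW_two {α β l u v w : F h} (hw : w ≠ 0)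
    (hT : Tr ((α + l * (u / w) ^ 2) * (β + l * (v / w) ^ 2)) = 0) :
    ∃ P Q : Pt h, P ≠ Q ∧ conic α β l ∩ lineSet u v w = {P, Q} := by
  obtain ⟨x₁, y₁, x₂, y₂, hn1, hn2, hs1, hs2, hne, hcl⟩ := quad_sols hT
  have hv1ne : (![x₁, y₁, u / w * x₁ + v / w * y₁] : Fin 3 → F h) ≠ 0 := by
    intro hc
    rw [vec_eq_zero_iff] at hc
    exact hn1 ⟨by simpa using hc.1, by simpa using hc.2.1⟩
  have hv2ne : (![x₂, y₂, u / w * x₂ + v / w * y₂] : Fin 3 → F h) ≠ 0 := by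
    intro hc
    rw [vec_eq_zero_iff] at hc
    exact hn2 ⟨by simpa using hc.1, by simpa using hc.2.1⟩
  refine ⟨Projectivization.mk (F h) _ hv1ne, Projectivization.mk (F h) _ hv2ne, ?_, ?_⟩
  · rw [Ne, Projectivization.mk_eq_mk_iff]
    rintro ⟨c, hc⟩
    have e0 : (c : F h) * x₂ = x₁ := by
      have := congrFun hc 0
      simpa [Units.smul_def] using this
    have e1 : (c : F h) * y₂ = y₁ := by
      have := congrFun hc 1
      simpa [Units.smul_def] using this
    exact hne (by rw [← e0, ← e1]; ring)
  · ext P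
    induction P using Projectivization.ind with
    | h x hx =>
    rw [mem_inter_iff_w hw x hx]
    constructor
    · rintro ⟨hxy, hz, hq⟩
      obtain ⟨c, hc, hcase⟩ := hcl (x 0) (x 1) hxy hq
      rcases hcase with ⟨e0, e1⟩ | ⟨e0, e1⟩
      · left
        rw [Projectivization.mk_eq_mk_iff]
        refine ⟨Units.mk0 c hc, vec_eq_ext _ _ ?_ ?_ ?_⟩ <;>
          simp only [Units.smul_def, Units.val_mk0, Pi.smul_apply, smul_eq_mul,
            Matrix.cons_val_zero, Matrix.cons_val_one, Matrix.head_cons,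
            Matrix.cons_val_two, Matrix.tail_cons, Fin.isValue]
        · exact e0.symm
        · exact e1.symm
        · rw [hz, e0, e1]; ring
      · right
        rw [Set.mem_singleton_iff, Projectivization.mk_eq_mk_iff]
        refine ⟨Units.mk0 c hc, vec_eq_ext _ _ ?_ ?_ ?_⟩ <;>
          simp only [Units.smul_def, Units.val_mk0, Pi.smul_apply, smul_eq_mul,
            Matrix.cons_val_zero, Matrix.cons_val_one, Matrix.head_cons,
            Matrix.cons_val_two, Matrix.tail_cons, Fin.isValue]
        · exact e0.symm
        · exact e1.symm
        · rw [hz, e0, e1]; ring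
    · rintro (hP | hP)
      all_goals {
        try rw [Set.mem_singleton_iff] at hP
        rw [Projectivization.mk_eq_mk_iff] at hP
        obtain ⟨c, hc⟩ := hP
        have e0 := (congrFun hc 0).symm
        have e1 := (congrFun hc 1).symm
        have e2 := (congrFun hc 2).symm
        simp only [Units.smul_def, Pi.smul_apply, smul_eq_mul] at e0 e1 e2
        simp only [Matrix.cons_val_zero, Matrix.cons_val_one, Matrix.head_cons,
          Matrix.cons_val_two, Matrix.tail_cons, Fin.isValue] at e0 e1 e2
        first
        | (refine ⟨?_, ?_, ?_⟩
           · rintro ⟨ha0, hb0⟩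
             rw [ha0] at e0; rw [hb0] at e1
             rcases mul_eq_zero.1 e0.symm with h1 | h1
             · exact c.ne_zero h1
             · rcases mul_eq_zero.1 e1.symm with hg1 | hg1
               · exact c.ne_zero hg1
               · exact hn1 ⟨h1, hg1⟩
           · rw [e0, e1, e2]; ring
           · rw [e0, e1]
             linear_combination (c:F h)^2 * hs1)
        | (refine ⟨?_, ?_, ?_⟩
           · rintro ⟨ha0, hb0⟩
             rw [ha0] at e0; rw [hb0] at e1
             rcases mul_eq_zero.1 e0.symm with h1 | h1
             · exact c.ne_zero h1
             · rcases mul_eq_zero.1 e1.symm with hg1 | hg1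
               · exact c.ne_zero hg1
               · exact hn2 ⟨h1, hg1⟩
           · rw [e0, e1, e2]; ring
           · rw [e0, e1]
             linear_combination (c:F h)^2 * hs2)
      }

lemma ncard_finset_biUnion {ι : Type*} [DecidableEq ι] {γ : Type*} (s : Finset ι)
    (G : ι → Set γ) (hfin : ∀ i ∈ s, (G i).Finite)
    (hdisj : ∀ i ∈ s, ∀ j ∈ s, i ≠ j → Disjoint (G i) (G j)) :
    (⋃ i ∈ s, G i).ncard = ∑ i ∈ s, (G i).ncard := by
  classical
  induction s using Finset.induction_on with
  | empty => simp
  | @insert a s ha ih =>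
    rw [Finset.set_biUnion_insert, Finset.sum_insert ha]
    have hfin' : (⋃ i ∈ s, G i).Finite := by
      apply Set.Finite.biUnion (Finset.finite_toSet s)
      intro i hi
      exact hfin i (Finset.mem_insert_of_mem hi)
    have hdisj' : Disjoint (G a) (⋃ i ∈ s, G i) := by
      rw [Set.disjoint_iUnion_right]
      intro i
      rw [Set.disjoint_iUnion_right]
      intro hi
      exact hdisj a (Finset.mem_insert_self a s) i (Finset.mem_insert_of_mem hi)
        (fun hai => ha (hai ▸ hi))
    rw [Set.ncard_union_eq hdisj' (hfin a (Finset.mem_insert_self a s)) hfin']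
    rw [ih (fun i hi => hfin i (Finset.mem_insert_of_mem hi))
      (fun i hi j hj hij => hdisj i (Finset.mem_insert_of_mem hi) j
        (Finset.mem_insert_of_mem hj) hij)]

lemma AB_ident (s t fs ft gs gt : F h) (hs : s ≠ 0) (ht : t ≠ 0) (hn : s + t ≠ 0) :
    (fs/s + s*((fs/s + ft/t)/(s+t))) * (gs/s + s*((gs/s + gt/t)/(s+t)))
      = (fs/s)*(gs/s) + (ft/t)*(gt/t) + ((fs+ft)*(gs+gt))/(s+t)^2 := by
  have hE : (s * (s * t * (s + t)) * (s * (s * t * (s + t)))) ≠ 0 := by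
    apply mul_ne_zero <;> [skip; skip] <;>
      exact mul_ne_zero hs (mul_ne_zero (mul_ne_zero hs ht) hn)
  field_simp
  linear_combination (s*t*(fs*gs*t^2 + fs*gt*s^2 + ft*gs*s^2 - ft*gt*s^2) + s^2*t^2*(fs*gs - ft*gt)) * h2'

lemma conics_disjoint {αs βs αt βt s t : F h} (hs : s ≠ 0) (ht : t ≠ 0) (hst : s ≠ t)
    (hT : Tr ((αs + s * ((αs + αt) / (s + t))) * (βs + s * ((βs + βt) / (s + t)))) = 1) :
    conic αs βs s ∩ conic αt βt t = ∅ := by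
  have hν : s + t ≠ 0 := fun hc => hst (by linear_combination hc - t * h2')
  ext P
  induction P using Projectivization.ind with
  | h x hx =>
  simp only [Set.mem_empty_iff_false, iff_false, Set.mem_inter_iff]
  rw [mem_conic_iff, mem_conic_iff]
  rintro ⟨e1, e2⟩
  have hsum : (αs + αt) * x 0 ^ 2 + (βs + βt) * x 1 ^ 2 + (s + t) * x 2 ^ 2 = 0 := by
    linear_combination e1 + e2 - (x 0 * x 1) * h2'
  have hxy : ¬(x 0 = 0 ∧ x 1 = 0) := by
    rintro ⟨ha, hb⟩
    have hz2 : (s + t) * x 2 ^ 2 = 0 := by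
      rw [ha, hb] at hsum
      linear_combination hsum
    have hx2 : x 2 = 0 := by
      rcases mul_eq_zero.1 hz2 with h1 | h1
      · exact absurd h1 hν
      · exact pow_eq_zero_iff (n := 2) (by norm_num) |>.1 h1
    exact hx (vec_eq_zero_iff x |>.2 ⟨ha, hb, hx2⟩)
  have hq : (αs + s*((αs+αt)/(s+t))) * x 0 ^ 2 + x 0 * x 1
      + (βs + s*((βs+βt)/(s+t))) * x 1 ^ 2 = 0 := by
    have hA : (s + t) * (s * ((αs + αt)/(s+t))) = s * (αs+αt) := by field_simp
    have hB : (s + t) * (s * ((βs + βt)/(s+t))) = s * (βs+βt) := by field_simp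
    have key : (s+t) * ((αs + s*((αs+αt)/(s+t))) * x 0 ^ 2 + x 0 * x 1
        + (βs + s*((βs+βt)/(s+t))) * x 1 ^ 2) = 0 := by
      linear_combination x 0^2 * hA + x 1^2 * hB + (s+t) * e1 + s * hsum - s*(s+t)*x 2^2*h2'
    rcases mul_eq_zero.1 key with hk | hk
    · exact absurd hk hν
    · exact hk
  exact quad_no_sol hT (x 0) (x 1) hxy hq

end Aux

theorem stmt5 (h : ℕ) (hh : h ≠ 0) (B : Finset (F h))
    (hB0 : (0 : F h) ∈ B) (hBadd : ∀ s ∈ B, ∀ t ∈ B, s + t ∈ B)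
    (f g : F h → F h)
    (hf : ∀ s ∈ B, ∀ t ∈ B, f (s + t) = f s + f t)
    (hg : ∀ s ∈ B, ∀ t ∈ B, g (s + t) = g s + g t)
    (htr : ∀ s ∈ B, ∀ t ∈ B, s ≠ t →
        Tr ((f s + f t) * (g s + g t) / (s + t) ^ 2) = 1) :
    (∀ t ∈ B, t ≠ 0 → Tr (f t / t * (g t / t)) = 1) ∧
    (∀ s ∈ B, ∀ t ∈ B, s ≠ 0 → t ≠ 0 → s ≠ t →
        (s * (f s / s) + t * (f t / t)) / (s + t) = f (s + t) / (s + t) ∧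
        (s * (g s / s) + t * (g t / t)) / (s + t) = g (s + t) / (s + t)) ∧
    IsClosedConicSet ((B.erase 0).image fun t => (f t / t, g t / t, t)) ∧
    (∀ u v w : F h, (u, v, w) ≠ (0, 0, 0) →
        (mathonArc ((B.erase 0).image fun t => (f t / t, g t / t, t)) ∩
            lineSet u v w).ncard = 0 ∨
        (mathonArc ((B.erase 0).image fun t => (f t / t, g t / t, t)) ∩
            lineSet u v w).ncard = B.card) := by
  classical
  have hf0 : f 0 = 0 := by
    have hff := hf 0 hB0 0 hB0
    rw [add_zero] at hff
    linear_combination -hff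
  have hg0 : g 0 = 0 := by
    have hgg := hg 0 hB0 0 hB0
    rw [add_zero] at hgg
    linear_combination -hgg
  have part1 : ∀ t ∈ B, t ≠ 0 → Tr (f t / t * (g t / t)) = 1 := by
    intro t htB ht0
    have key := htr 0 hB0 t htB (Ne.symm ht0)
    rw [hf0, hg0, zero_add, zero_add, zero_add] at key
    have hft : f t / t * (g t / t) = f t * g t / t ^ 2 := by
      field_simp
    rw [hft]
    exact key
  have hsumne : ∀ s t : F h, s ≠ t → s + t ≠ 0 := by
    intro s t hst hc
    exact hst (by linear_combination hc - t * h2')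
  have part2 : ∀ s ∈ B, ∀ t ∈ B, s ≠ 0 → t ≠ 0 → s ≠ t →
      (s * (f s / s) + t * (f t / t)) / (s + t) = f (s + t) / (s + t) ∧
      (s * (g s / s) + t * (g t / t)) / (s + t) = g (s + t) / (s + t) := by
    intro s hsB t htB hs0 ht0 hst
    have e1 : s * (f s / s) = f s := by field_simp
    have e2 : t * (f t / t) = f t := by field_simp
    have e3 : s * (g s / s) = g s := by field_simp
    have e4 : t * (g t / t) = g t := by field_simp
    rw [e1, e2, e3, e4, hf s hsB t htB, hg s hsB t htB]
    exact ⟨rfl, rfl⟩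
  have part3 : IsClosedConicSet ((B.erase 0).image fun t => (f t / t, g t / t, t)) := by
    refine ⟨?_, ?_, ?_⟩
    · intro c hc
      obtain ⟨t, htE, rfl⟩ := Finset.mem_image.1 hc
      obtain ⟨ht0, htB⟩ := Finset.mem_erase.1 htE
      exact ⟨ht0, part1 t htB ht0⟩
    · intro c hc c' hc' hne
      obtain ⟨t, htE, rfl⟩ := Finset.mem_image.1 hc
      obtain ⟨t', htE', rfl⟩ := Finset.mem_image.1 hc'
      intro h22
      have htt : t = t' := h22
      subst htt
      exact hne rfl
    · intro c hc c' hc' hne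
      obtain ⟨t, htE, rfl⟩ := Finset.mem_image.1 hc
      obtain ⟨t', htE', rfl⟩ := Finset.mem_image.1 hc'
      obtain ⟨ht0, htB⟩ := Finset.mem_erase.1 htE
      obtain ⟨ht0', htB'⟩ := Finset.mem_erase.1 htE'
      have hst : t ≠ t' := by
        intro hcc
        subst hcc
        exact hne rfl
      apply Finset.mem_image.2
      refine ⟨t + t', Finset.mem_erase.2 ⟨hsumne t t' hst, hBadd t htB t' htB'⟩, ?_⟩
      simp only [compose, Prod.mk.injEq]
      refine ⟨?_, ?_, trivial⟩
      · rw [div_mul_cancel₀ (f t) ht0, div_mul_cancel₀ (f t') ht0', ← hf t htB t' htB']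
      · rw [div_mul_cancel₀ (g t) ht0, div_mul_cancel₀ (g t') ht0', ← hg t htB t' htB']
  refine ⟨part1, part2, part3, ?_⟩
  intro u v w huvw
  -- common facts
  have hUeq : (⋃ c ∈ ((B.erase 0).image fun t => (f t / t, g t / t, t)),
        conic c.1 c.2.1 c.2.2) = ⋃ t ∈ B.erase 0, conic (f t / t) (g t / t) t := by
    ext P
    simp only [Set.mem_iUnion, Finset.mem_image, exists_prop]
    constructor
    · rintro ⟨c, ⟨t, htE, rfl⟩, hP⟩
      exact ⟨t, htE, hP⟩
    · rintro ⟨t, htE, hP⟩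
      exact ⟨_, ⟨t, htE, rfl⟩, hP⟩
  have hdisj : ∀ s' ∈ B.erase 0, ∀ t' ∈ B.erase 0, s' ≠ t' →
      conic (f s' / s') (g s' / s') s' ∩ conic (f t' / t') (g t' / t') t' = ∅ := by
    intro s' hsE t' htE hst
    obtain ⟨hs0, hsB⟩ := Finset.mem_erase.1 hsE
    obtain ⟨ht0, htB⟩ := Finset.mem_erase.1 htE
    have hν : s' + t' ≠ 0 := hsumne s' t' hst
    apply conics_disjoint hs0 ht0 hst
    rw [AB_ident s' t' (f s') (f t') (g s') (g t') hs0 ht0 hν, Tr_add, Tr_add,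
      part1 s' hsB hs0, part1 t' htB ht0, htr s' hsB t' htB hst]
    decide
  by_cases hw : w = 0
  · -- line through the nucleus
    subst hw
    right
    have huv : ¬(u = 0 ∧ v = 0) := by
      rintro ⟨hu, hv⟩
      exact huvw (by simp [hu, hv])
    have hne3 : ∀ z : F h, (![v, u, z] : Fin 3 → F h) ≠ 0 := by
      intro z hc
      rw [vec_eq_zero_iff] at hc
      exact huv ⟨by simpa using hc.2.1, by simpa using hc.1⟩
    set q0 : F h → Pt h := fun t => Projectivization.mk (F h)
      ![v, u, fsqrt ((f t / t * v ^ 2 + u * v + g t / t * u ^ 2) / t)] (hne3 _) with hq0def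
    have hq0 : ∀ t ∈ B.erase 0,
        conic (f t / t) (g t / t) t ∩ lineSet u v 0 = {q0 t} := by
      intro t htE
      exact conic_inter_line0 (Finset.mem_erase.1 htE).1 huv
    have hq0conic : ∀ t ∈ B.erase 0, q0 t ∈ conic (f t / t) (g t / t) t := by
      intro t htE
      have hmem : q0 t ∈ conic (f t / t) (g t / t) t ∩ lineSet u v 0 := by
        rw [hq0 t htE]
        exact Set.mem_singleton _
      exact hmem.1
    have hS : mathonArc ((B.erase 0).image fun t => (f t / t, g t / t, t)) ∩ lineSet u v 0
        = ↑(insert nucleus ((B.erase 0).image q0)) := by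
      rw [mathonArc, Set.union_inter_distrib_right, hUeq]
      have hnuc : ({nucleus} : Set (Pt h)) ∩ lineSet u v 0 = {nucleus} :=
        Set.inter_eq_left.2 (Set.singleton_subset_iff.2 (nucleus_mem_lineSet_iff.2 rfl))
      rw [hnuc, Set.iUnion₂_inter]
      have hcongr : (⋃ t ∈ B.erase 0, (conic (f t / t) (g t / t) t ∩ lineSet u v 0))
          = ⋃ t ∈ B.erase 0, ({q0 t} : Set (Pt h)) := Set.iUnion₂_congr hq0
      rw [hcongr]
      ext P
      simp only [Set.mem_union, Set.mem_singleton_iff, Set.mem_iUnion, exists_prop,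
        Finset.coe_insert, Set.mem_insert_iff, Finset.mem_coe, Finset.mem_image]
      constructor
      · rintro (rfl | ⟨t, htE, rfl⟩)
        · exact Or.inl rfl
        · exact Or.inr ⟨t, htE, rfl⟩
      · rintro (rfl | ⟨t, htE, rfl⟩)
        · exact Or.inl rfl
        · exact Or.inr ⟨t, htE, rfl⟩
    rw [hS, Set.ncard_coe_finset]
    have hnotmem : nucleus ∉ (B.erase 0).image q0 := by
      intro hmem
      obtain ⟨t, htE, hqe⟩ := Finset.mem_image.1 hmem
      exact nucleus_not_mem_conic (Finset.mem_erase.1 htE).1 (hqe ▸ hq0conic t htE)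
    have hinj : Set.InjOn q0 ↑(B.erase 0) := by
      intro t1 hm1 t2 hm2 heq12
      by_contra hne12
      have hd := hdisj t1 (Finset.mem_coe.1 hm1) t2 (Finset.mem_coe.1 hm2) hne12
      have hmem2 : q0 t1 ∈ conic (f t2 / t2) (g t2 / t2) t2 :=
        heq12 ▸ hq0conic t2 (Finset.mem_coe.1 hm2)
      have hp : q0 t1 ∈ (∅ : Set (Pt h)) :=
        hd ▸ Set.mem_inter (hq0conic t1 (Finset.mem_coe.1 hm1)) hmem2
      exact hp
    rw [Finset.card_insert_of_notMem hnotmem, Finset.card_image_of_injOn hinj,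
      Finset.card_erase_of_mem hB0]
    have hpos : 0 < B.card := Finset.card_pos.2 ⟨0, hB0⟩
    omega
  · -- line not through the nucleus
    set φ : F h → ZMod 2 :=
      fun t => Tr ((u / w) ^ 2 * g t + (v / w) ^ 2 * f t + (u / w) ^ 2 * (v / w) ^ 2 * t ^ 2)
      with hφdef
    have hφ0 : φ 0 = 0 := by
      have harg : (u / w) ^ 2 * g 0 + (v / w) ^ 2 * f 0 + (u / w) ^ 2 * (v / w) ^ 2 * 0 ^ 2
          = 0 := by
        rw [hf0, hg0]; ring
      rw [hφdef]
      simp only [harg]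
      exact map_zero _
    have hφadd : ∀ s' ∈ B, ∀ t' ∈ B, φ (s' + t') = φ s' + φ t' := by
      intro s' hsB t' htB
      have harg : (u / w) ^ 2 * g (s' + t') + (v / w) ^ 2 * f (s' + t')
            + (u / w) ^ 2 * (v / w) ^ 2 * (s' + t') ^ 2
          = ((u / w) ^ 2 * g s' + (v / w) ^ 2 * f s' + (u / w) ^ 2 * (v / w) ^ 2 * s' ^ 2)
            + ((u / w) ^ 2 * g t' + (v / w) ^ 2 * f t' + (u / w) ^ 2 * (v / w) ^ 2 * t' ^ 2) := by
        rw [hf s' hsB t' htB, hg s' hsB t' htB, CharTwo.add_sq]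
        ring
      rw [hφdef]
      simp only [harg]
      exact Tr_add _ _
    have hTrAB : ∀ t ∈ B.erase 0,
        Tr ((f t / t + t * (u / w) ^ 2) * (g t / t + t * (v / w) ^ 2)) = 1 + φ t := by
      intro t htE
      obtain ⟨ht0, htB⟩ := Finset.mem_erase.1 htE
      have ha1 : t * (g t / t) = g t := by field_simp
      have ha2 : t * (f t / t) = f t := by field_simp
      have hexp : (f t / t + t * (u / w) ^ 2) * (g t / t + t * (v / w) ^ 2)
          = f t / t * (g t / t)
            + ((u / w) ^ 2 * g t + (v / w) ^ 2 * f t + (u / w) ^ 2 * (v / w) ^ 2 * t ^ 2) := by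
        linear_combination (u / w) ^ 2 * ha1 + (v / w) ^ 2 * ha2
      rw [hexp, Tr_add, part1 t htB ht0]
    have hGprops : ∀ t ∈ B.erase 0,
        (conic (f t / t) (g t / t) t ∩ lineSet u v w).Finite ∧
        (conic (f t / t) (g t / t) t ∩ lineSet u v w).ncard = if φ t = 1 then 2 else 0 := by
      intro t htE
      by_cases hφt : φ t = 1
      · have hT0 : Tr ((f t / t + t * (u / w) ^ 2) * (g t / t + t * (v / w) ^ 2)) = 0 := by
          rw [hTrAB t htE, hφt]
          decide
        obtain ⟨P, Q, hPQ, hset⟩ := conic_inter_lineW_two hw hT0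
        rw [hset]
        refine ⟨Set.toFinite _, ?_⟩
        rw [Set.ncard_pair hPQ, if_pos hφt]
      · have hφt0 : φ t = 0 := by
          have hall : ∀ a : ZMod 2, a ≠ 1 → a = 0 := by decide
          exact hall _ hφt
        have hT1 : Tr ((f t / t + t * (u / w) ^ 2) * (g t / t + t * (v / w) ^ 2)) = 1 := by
          rw [hTrAB t htE, hφt0, add_zero]
        rw [conic_inter_lineW_empty hw hT1]
        simp [hφt]
    have hSeq : mathonArc ((B.erase 0).image fun t => (f t / t, g t / t, t)) ∩ lineSet u v w
        = ⋃ t ∈ B.erase 0, (conic (f t / t) (g t / t) t ∩ lineSet u v w) := by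
      rw [mathonArc, Set.union_inter_distrib_right, hUeq, Set.iUnion₂_inter]
      have hnuc : ({nucleus} : Set (Pt h)) ∩ lineSet u v w = ∅ := by
        rw [Set.singleton_inter_eq_empty, nucleus_mem_lineSet_iff]
        exact hw
      rw [hnuc, Set.empty_union]
    have hcard : (mathonArc ((B.erase 0).image fun t => (f t / t, g t / t, t))
        ∩ lineSet u v w).ncard
        = ∑ t ∈ B.erase 0, (conic (f t / t) (g t / t) t ∩ lineSet u v w).ncard := by
      rw [hSeq]
      apply ncard_finset_biUnion
      · intro i hi
        exact (hGprops i hi).1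
      · intro i hi j hj hij
        have hd := hdisj i hi j hj hij
        have hsub : (conic (f i / i) (g i / i) i ∩ lineSet u v w)
            ∩ (conic (f j / j) (g j / j) j ∩ lineSet u v w)
            ⊆ conic (f i / i) (g i / i) i ∩ conic (f j / j) (g j / j) j :=
          fun P hP => ⟨hP.1.1, hP.2.1⟩
        rw [hd] at hsub
        exact Set.disjoint_iff_inter_eq_empty.2 (Set.subset_empty_iff.1 hsub)
    have hsum2 : ∑ t ∈ B.erase 0, (conic (f t / t) (g t / t) t ∩ lineSet u v w).ncard
        = 2 * ((B.erase 0).filter (fun t => φ t = 1)).card := by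
      rw [Finset.sum_congr rfl (fun i hi => (hGprops i hi).2), ← Finset.sum_filter,
        Finset.sum_const, smul_eq_mul, mul_comm]
    have hfeq : (B.erase 0).filter (fun t => φ t = 1) = B.filter (fun t => φ t = 1) := by
      ext x
      simp only [Finset.mem_filter, Finset.mem_erase]
      constructor
      · rintro ⟨⟨hx0, hxB⟩, hpx⟩
        exact ⟨hxB, hpx⟩
      · rintro ⟨hxB, hpx⟩
        refine ⟨⟨?_, hxB⟩, hpx⟩
        rintro rfl
        rw [hφ0] at hpx
        exact (by decide : (0 : ZMod 2) ≠ 1) hpx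
    set N := (B.filter (fun t => φ t = 1)).card with hNdef
    by_cases hN : N = 0
    · left
      rw [hcard, hsum2, hfeq, ← hNdef, hN]
    · right
      obtain ⟨t₀, ht₀⟩ := Finset.card_pos.mp (Nat.pos_of_ne_zero (by rw [hNdef] at hN; exact hN))
      obtain ⟨ht₀B, hφt₀⟩ := Finset.mem_filter.1 ht₀
      have hinv : ∀ a : F h, a + t₀ + t₀ = a := by
        intro a
        rw [add_assoc, CharTwo.add_self_eq_zero, add_zero]
      have hbij : (B.filter (fun t => φ t = 1)).card
          = (B.filter (fun t => ¬(φ t = 1))).card := by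
        apply Finset.card_bij' (i := fun a _ => a + t₀) (j := fun a _ => a + t₀)
        · intro a ha
          obtain ⟨haB, hφa⟩ := Finset.mem_filter.1 ha
          refine Finset.mem_filter.2 ⟨hBadd a haB t₀ ht₀B, ?_⟩
          rw [hφadd a haB t₀ ht₀B, hφa, hφt₀]
          decide
        · intro a ha
          obtain ⟨haB, hφa⟩ := Finset.mem_filter.1 ha
          have hφa0 : φ a = 0 := by
            have hall : ∀ x : ZMod 2, x ≠ 1 → x = 0 := by decide
            exact hall _ hφa
          refine Finset.mem_filter.2 ⟨hBadd a haB t₀ ht₀B, ?_⟩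
          rw [hφadd a haB t₀ ht₀B, hφa0, hφt₀]
          decide
        · intro a ha
          exact hinv a
        · intro a ha
          exact hinv a
      have hsplit : (B.filter (fun t => φ t = 1)).card
          + (B.filter (fun t => ¬(φ t = 1))).card = B.card :=
        Finset.card_filter_add_card_filter_not (p := fun t => φ t = 1)
      rw [hcard, hsum2, hfeq, ← hNdef]
      omega
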